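/- Let f be a continuous, homogeneous, order-preserving map on a closed solid cone K with eigenvector x_f ∈ Int(K) satisfying f(x_f) = ρ_K(f) x_f. Then for any y ∈ Int(K), the operator norm of f with respect to the order-unit norm ‖·‖_y satisfies ‖f‖_y ≤ ρ_K(f) · M(x_f/y)/m(x_f/y), where M(u/v) = inf{β : u ≤_K βv} and m(u/v) = sup{α : αv ≤_K u}. -/

import Mathlib

/-- The induced operator "norm" of a map over the unit ball of the cone `K`. -/
noncomputable def opNormK {V : Type*} [NormedAddCommGroup V] (K : Set V) (f : V → V) : ℝ :=
  sSup ((fun x => ‖f x‖) '' {x | x ∈ K ∧ ‖x‖ ≤ 1})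

/-- The cone spectral radius of a single map via the Gelfand formula. -/
noncomputable def coneSpecRad {V : Type*} [NormedAddCommGroup V] (K : Set V) (f : V → V) : ℝ :=
  Filter.limsup (fun m : ℕ => opNormK K (f^[m]) ^ ((m : ℝ))⁻¹) Filter.atTop

/-- `M(y/x) = inf { β : y ≤_K β x }`. -/
noncomputable def Mrel {V : Type*} [AddCommGroup V] [Module ℝ V] (K : Set V) (y x : V) : ℝ :=
  sInf {β : ℝ | β • x - y ∈ K}

/-- `m(y/x) = sup { α : α x ≤_K y }`. -/
noncomputable def mrel {V : Type*} [AddCommGroup V] [Module ℝ V] (K : Set V) (y x : V) : ℝ :=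
  sSup {α : ℝ | y - α • x ∈ K}

lemma coneSpecRad_nonneg {V : Type*} [NormedAddCommGroup V] (K : Set V) (f : V → V) :
    0 ≤ coneSpecRad K f := by
  unfold coneSpecRad
  rw [Filter.limsup_eq]
  apply Real.sInf_nonneg
  intro a ha
  simp only [Set.mem_setOf_eq] at ha
  obtain ⟨n, hn⟩ := ha.exists
  refine le_trans ?_ hn
  apply Real.rpow_nonneg
  apply Real.sSup_nonneg
  rintro x ⟨w, -, rfl⟩
  exact norm_nonneg _

/-- bound on the `y`-order-unit operator norm of `f` in terms of the spectral
radius and the comparability constants of the dominant eigenvector with `y`. -/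
theorem stmt11 {V : Type*} [NormedAddCommGroup V] [NormedSpace ℝ V] [FiniteDimensional ℝ V]
    (K : Set V) (hKcl : IsClosed K) (hKconv : Convex ℝ K)
    (hKcone : ∀ c : ℝ, 0 ≤ c → ∀ x ∈ K, c • x ∈ K)
    (hKsolid : (interior K).Nonempty)
    (f : V → V) (hmap : ∀ x ∈ K, f x ∈ K) (hcont : ContinuousOn f K)
    (hhom : ∀ x ∈ K, ∀ c : ℝ, 0 ≤ c → f (c • x) = c • f x)
    (hord : ∀ x ∈ K, ∀ y ∈ K, y - x ∈ K → f y - f x ∈ K)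
    (xf : V) (hxf : xf ∈ interior K) (heig : f xf = coneSpecRad K f • xf)
    (y : V) (hy : y ∈ interior K) :
    sSup ((fun z => Mrel K (f z) y / Mrel K z y) '' (K \ {0})) ≤
      coneSpecRad K f * (Mrel K xf y / mrel K xf y) := by
  have hyK : y ∈ K := interior_subset hy
  have hxfK : xf ∈ K := interior_subset hxf
  have hρ : 0 ≤ coneSpecRad K f := coneSpecRad_nonneg K f
  have hzero : (0 : V) ∈ K := by simpa using hKcone 0 le_rfl y hyK
  have hadd : ∀ u ∈ K, ∀ v ∈ K, u + v ∈ K := by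
    intro u hu v hv
    have hmid : (1/2 : ℝ) • u + (1/2 : ℝ) • v ∈ K :=
      hKconv hu hv (by norm_num) (by norm_num) (by norm_num)
    have h2 := hKcone 2 (by norm_num) _ hmid
    rw [smul_add, smul_smul, smul_smul] at h2
    norm_num at h2
    exact h2
  by_cases hKV : -y ∈ K
  · -- degenerate case : K = univ
    have h0 : (0 : V) ∈ interior K := by
      have := hKconv.combo_interior_self_mem_interior hy hKV
        (a := 1/2) (b := 1/2) (by norm_num) (by norm_num) (by norm_num)
      simpa [smul_neg, add_neg_cancel] using this
    have hKuniv : K = Set.univ := by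
      obtain ⟨r, hr, hball⟩ := Metric.mem_nhds_iff.mp (mem_interior_iff_mem_nhds.mp h0)
      ext v
      simp only [Set.mem_univ, iff_true]
      rcases eq_or_ne v 0 with rfl | hv
      · exact hzero
      · have hnv : (0:ℝ) < ‖v‖ := norm_pos_iff.mpr hv
        have hε : (0:ℝ) < r / (2 * ‖v‖) := by positivity
        have hmem : (r / (2 * ‖v‖)) • v ∈ K := by
          apply hball
          simp only [Metric.mem_ball, dist_eq_norm, sub_zero, norm_smul,
            Real.norm_eq_abs, abs_of_pos hε]
          rw [div_mul_eq_mul_div, mul_comm]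
          rw [div_lt_iff₀ (by positivity)]
          nlinarith
        have := hKcone (r / (2 * ‖v‖))⁻¹ (le_of_lt (by positivity)) _ hmem
        rwa [smul_smul, inv_mul_cancel₀ (ne_of_gt hε), one_smul] at this
    subst hKuniv
    have hM : ∀ a b : V, Mrel Set.univ a b = 0 := by
      intro a b
      have : {β : ℝ | β • b - a ∈ Set.univ} = Set.univ := by simp
      rw [Mrel, this]
      exact Real.sInf_of_not_bddBelow not_bddBelow_univ
    rw [hM xf y, zero_div, mul_zero]
    apply Real.sSup_le _ le_rfl
    rintro a ⟨z, -, rfl⟩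
    simp [hM]
  · -- main case : -y ∉ K
    have hB : ∀ z ∈ K, ∀ β : ℝ, β • y - z ∈ K → 0 ≤ β := by
      intro z hz β hβ
      by_contra h
      push_neg at h
      have hβy : β • y ∈ K := by
        have := hadd _ hβ _ hz
        simpa using this
      have hneg : (0:ℝ) < -β := by linarith
      have := hKcone (-β)⁻¹ (le_of_lt (by positivity)) _ hβy
      apply hKV
      have he : (-β)⁻¹ * β = -1 := by rw [inv_neg, neg_mul, inv_mul_cancel₀ h.ne]
      rwa [smul_smul, he, neg_one_smul] at this
    -- nonemptiness of the M-sets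
    obtain ⟨r, hr0, hball⟩ := Metric.mem_nhds_iff.mp (mem_interior_iff_mem_nhds.mp hy)
    have hSne : ∀ z : V, ∃ β : ℝ, 0 < β ∧ β • y - z ∈ K := by
      intro z
      have hβ0 : (0:ℝ) < (‖z‖ + 1) / r := by positivity
      refine ⟨(‖z‖ + 1) / r, hβ0, ?_⟩
      have hmem : y - ((‖z‖ + 1) / r)⁻¹ • z ∈ Metric.ball y r := by
        rw [Metric.mem_ball, dist_eq_norm]
        have he : y - ((‖z‖ + 1) / r)⁻¹ • z - y = -(((‖z‖ + 1) / r)⁻¹ • z) := by abel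
        rw [he, norm_neg, norm_smul, Real.norm_eq_abs, abs_of_pos (inv_pos.mpr hβ0),
          inv_mul_lt_iff₀ hβ0, div_mul_cancel₀ _ (ne_of_gt hr0)]
        linarith
      have := hKcone _ hβ0.le _ (hball hmem)
      rwa [smul_sub, smul_inv_smul₀ (ne_of_gt hβ0)] at this
    have hScl : ∀ z : V, IsClosed {β : ℝ | β • y - z ∈ K} := by
      intro z
      exact hKcl.preimage (by fun_prop)
    have hSbdd : ∀ z ∈ K, BddBelow {β : ℝ | β • y - z ∈ K} :=
      fun z hz => ⟨0, fun β hβ => hB z hz β hβ⟩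
    -- properties of mrel K xf y
    obtain ⟨r2, hr2, hball2⟩ := Metric.mem_nhds_iff.mp (mem_interior_iff_mem_nhds.mp hxf)
    set ε : ℝ := r2 / (2 * (‖y‖ + 1)) with hεdef
    have hε0 : (0:ℝ) < ε := by positivity
    have hεT : xf - ε • y ∈ K := by
      apply hball2
      simp only [Metric.mem_ball, dist_eq_norm, sub_sub_cancel_left, norm_neg, norm_smul,
        Real.norm_eq_abs, abs_of_pos hε0]
      have h1 : ε * ‖y‖ < ε * (‖y‖ + 1) := by nlinarith
      have h2 : ε * (‖y‖ + 1) = r2 / 2 := by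
        rw [hεdef]; field_simp
      nlinarith
    obtain ⟨βx, hβx0, hβxS⟩ := hSne xf
    have hTbdd : BddAbove {α : ℝ | xf - α • y ∈ K} := by
      refine ⟨βx, fun α hα => ?_⟩
      have h := hadd _ hβxS _ hα
      have hmem : (βx - α) • y - 0 ∈ K := by
        rw [sub_zero, sub_smul]
        convert h using 1
        abel
      linarith [hB 0 hzero _ hmem]
    have hTcl : IsClosed {α : ℝ | xf - α • y ∈ K} := hKcl.preimage (by fun_prop)
    have hmx_mem : xf - mrel K xf y • y ∈ K :=
      hTcl.csSup_mem ⟨ε, hεT⟩ hTbdd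
    have hmx0 : 0 < mrel K xf y := lt_of_lt_of_le hε0 (le_csSup hTbdd hεT)
    -- properties of Mrel K xf y
    have hMx_mem : Mrel K xf y • y - xf ∈ K :=
      (hScl xf).csInf_mem ⟨βx, hβxS⟩ (hSbdd xf hxfK)
    have hMx0 : 0 ≤ Mrel K xf y := hB xf hxfK _ hMx_mem
    have hRHS : 0 ≤ coneSpecRad K f * (Mrel K xf y / mrel K xf y) :=
      mul_nonneg hρ (div_nonneg hMx0 hmx0.le)
    apply Real.sSup_le _ hRHS
    rintro a ⟨z, ⟨hzK, -⟩, rfl⟩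
    simp only
    set ρ := coneSpecRad K f
    set Mx := Mrel K xf y
    set mx := mrel K xf y
    set Mz := Mrel K z y with hMzdef
    have hMz_mem : Mz • y - z ∈ K := by
      obtain ⟨β, hβ0, hβ⟩ := hSne z
      exact (hScl z).csInf_mem ⟨β, hβ⟩ (hSbdd z hzK)
    have hMz0 : 0 ≤ Mz := hB z hzK _ hMz_mem
    have hc : (0:ℝ) ≤ Mz / mx := div_nonneg hMz0 hmx0.le
    have h4 : (Mz / mx) • xf - z ∈ K := by
      have h := hadd _ (hKcone _ hc _ hmx_mem) _ hMz_mem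
      convert h using 1
      rw [smul_sub, smul_smul, div_mul_cancel₀ _ (ne_of_gt hmx0)]
      abel
    have h5 : f ((Mz / mx) • xf) - f z ∈ K :=
      hord z hzK _ (hKcone _ hc _ hxfK) h4
    rw [hhom xf hxfK _ hc, heig, smul_smul] at h5
    have h7 : (Mz / mx * ρ) • (Mx • y - xf) ∈ K :=
      hKcone _ (mul_nonneg hc hρ) _ hMx_mem
    have hkey : (Mz / mx * ρ * Mx) • y - f z ∈ K := by
      have h := hadd _ h7 _ h5
      convert h using 1
      rw [smul_sub, smul_smul]
      abel
    have hfzK : f z ∈ K := hmap z hzK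
    have hle : Mrel K (f z) y ≤ Mz / mx * ρ * Mx :=
      csInf_le (hSbdd (f z) hfzK) hkey
    have hMfz0 : 0 ≤ Mrel K (f z) y := by
      obtain ⟨β, hβ0, hβ⟩ := hSne (f z)
      exact hB (f z) hfzK _ ((hScl (f z)).csInf_mem ⟨β, hβ⟩ (hSbdd (f z) hfzK))
    rcases eq_or_lt_of_le hMz0 with hMz | hMz
    · rw [← hMz, div_zero]
      exact hRHS
    · rw [div_le_iff₀ hMz]
      calc Mrel K (f z) y ≤ Mz / mx * ρ * Mx := hle
        _ = ρ * (Mx / mx) * Mz := by ring
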